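/- Let $S \subset (0,\infty)$ be a set of reals such that $|s + t - u| \ge c$ for all $s, t, u \in S$ and some $c > 0$. If $a_1, a_2, a_3 \in \mathbb{R}^2$ satisfy $|a_i - a_j| \in S$ and $|a_i - a_j| \ge L$ for all $i \ne j$, then $a_1, a_2, a_3$ cannot all lie in a strip of width $\sqrt{cL}/10$. -/
import Mathlib

private lemma pairkey (c L d p q W : ℝ) (hc : 0 < c) (hd : 0 < d) (hL : L ≤ d)
    (hW : W = Real.sqrt (c*L)/10/2)
    (hpq : p^2 + q^2 = d^2) (hp : |p| ≤ 2*W) :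
    |q| ≤ d ∧ d - |q| ≤ c/100 := by
  have h4 : (2*W)^2 ≤ c*d/100 := by
    rcases le_or_gt (c*L) 0 with h | h
    · have h0 : Real.sqrt (c*L) = 0 := Real.sqrt_eq_zero'.mpr h
      rw [hW, h0]
      nlinarith
    · have hs := Real.sq_sqrt h.le
      have hLd : c*L ≤ c*d := by nlinarith
      rw [hW]
      nlinarith
  have hp2 : p^2 ≤ (2*W)^2 := by nlinarith [sq_abs p, abs_nonneg p]
  have hq2 : q^2 ≤ d^2 := by nlinarith [sq_nonneg p]
  have hqd : |q| ≤ d := by nlinarith [sq_abs q, abs_nonneg q]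
  refine ⟨hqd, ?_⟩
  have key : (d - |q|) * d ≤ c/100 * d := by nlinarith [sq_abs q, abs_nonneg q]
  exact le_of_mul_le_mul_right key hd

private lemma aux3 (c d12 d13 d23 q1 q2 q3 : ℝ) (hc : 0 < c)
    (e12 : d12 - |q1 - q2| ≤ c/100) (e13 : d13 - |q1 - q3| ≤ c/100)
    (e23 : d23 - |q2 - q3| ≤ c/100)
    (g12 : |q1 - q2| ≤ d12) (g13 : |q1 - q3| ≤ d13) (g23 : |q2 - q3| ≤ d23)
    (f1 : c ≤ |d12 + d13 - d23|) (f2 : c ≤ |d12 + d23 - d13|)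
    (f3 : c ≤ |d13 + d23 - d12|) : False := by
  rcases abs_cases (q1 - q2) with ⟨A1, s1⟩ | ⟨A1, s1⟩ <;>
  rcases abs_cases (q1 - q3) with ⟨A2, s2⟩ | ⟨A2, s2⟩ <;>
  rcases abs_cases (q2 - q3) with ⟨A3, s3⟩ | ⟨A3, s3⟩ <;>
  rcases abs_cases (d12 + d13 - d23) with ⟨B1, u1⟩ | ⟨B1, u1⟩ <;>
  rcases abs_cases (d12 + d23 - d13) with ⟨B2, u2⟩ | ⟨B2, u2⟩ <;>
  rcases abs_cases (d13 + d23 - d12) with ⟨B3, u3⟩ | ⟨B3, u3⟩ <;>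
  linarith

theorem stmt3 (S : Set ℝ) (hS : S ⊆ Set.Ioi 0) (c : ℝ) (hc : 0 < c)
    (hsf : ∀ s ∈ S, ∀ t ∈ S, ∀ u ∈ S, c ≤ |s + t - u|)
    (L : ℝ) (a1 a2 a3 : EuclideanSpace ℝ (Fin 2))
    (h12 : dist a1 a2 ∈ S) (h13 : dist a1 a3 ∈ S) (h23 : dist a2 a3 ∈ S)
    (hL12 : L ≤ dist a1 a2) (hL13 : L ≤ dist a1 a3) (hL23 : L ≤ dist a2 a3) :
    ¬ ∃ (v : EuclideanSpace ℝ (Fin 2)) (t : ℝ), v 0 ^ 2 + v 1 ^ 2 = 1 ∧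
      ∀ a ∈ ({a1, a2, a3} : Set (EuclideanSpace ℝ (Fin 2))),
        |a 0 * v 0 + a 1 * v 1 - t| ≤ Real.sqrt (c * L) / 10 / 2 := by
  rintro ⟨v, t, hv, hstrip⟩
  set W : ℝ := Real.sqrt (c * L) / 10 / 2 with hWdef
  have hs1 := hstrip a1 (by simp)
  have hs2 := hstrip a2 (by simp)
  have hs3 := hstrip a3 (by simp)
  have hdist : ∀ a b : EuclideanSpace ℝ (Fin 2),
      dist a b ^ 2 = (a 0 - b 0) ^ 2 + (a 1 - b 1) ^ 2 := by
    intro a b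
    rw [EuclideanSpace.dist_eq, Real.sq_sqrt (by positivity)]
    simp [Fin.sum_univ_two, Real.dist_eq, sq_abs]
  -- perpendicular coordinates
  set Q1 : ℝ := a1 1 * v 0 - a1 0 * v 1 with hQ1
  set Q2 : ℝ := a2 1 * v 0 - a2 0 * v 1 with hQ2
  set Q3 : ℝ := a3 1 * v 0 - a3 0 * v 1 with hQ3
  have main : ∀ a b : EuclideanSpace ℝ (Fin 2), dist a b ∈ S → L ≤ dist a b →
      |a 0 * v 0 + a 1 * v 1 - t| ≤ W → |b 0 * v 0 + b 1 * v 1 - t| ≤ W →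
      |(a 1 * v 0 - a 0 * v 1) - (b 1 * v 0 - b 0 * v 1)| ≤ dist a b ∧
      dist a b - |(a 1 * v 0 - a 0 * v 1) - (b 1 * v 0 - b 0 * v 1)| ≤ c / 100 := by
    intro a b hmem hLd ha hb
    have hd : 0 < dist a b := hS hmem
    set p : ℝ := (a 0 - b 0) * v 0 + (a 1 - b 1) * v 1 with hp
    set q : ℝ := (a 1 * v 0 - a 0 * v 1) - (b 1 * v 0 - b 0 * v 1) with hq
    have hpq : p ^ 2 + q ^ 2 = dist a b ^ 2 := by
      have h1 : p ^ 2 + q ^ 2 =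
          ((a 0 - b 0) ^ 2 + (a 1 - b 1) ^ 2) * (v 0 ^ 2 + v 1 ^ 2) := by
        rw [hp, hq]; ring
      rw [h1, hv, mul_one, ← hdist a b]
    have hpb : |p| ≤ 2 * W := by
      have : p = (a 0 * v 0 + a 1 * v 1 - t) - (b 0 * v 0 + b 1 * v 1 - t) := by
        rw [hp]; ring
      rw [this]
      calc |(a 0 * v 0 + a 1 * v 1 - t) - (b 0 * v 0 + b 1 * v 1 - t)|
          ≤ |a 0 * v 0 + a 1 * v 1 - t| + |b 0 * v 0 + b 1 * v 1 - t| :=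
            abs_sub _ _
        _ ≤ 2 * W := by linarith
    exact pairkey c L (dist a b) p q W hc hd hLd hWdef hpq hpb
  have m12 := main a1 a2 h12 hL12 hs1 hs2
  have m13 := main a1 a3 h13 hL13 hs1 hs3
  have m23 := main a2 a3 h23 hL23 hs2 hs3
  exact aux3 c (dist a1 a2) (dist a1 a3) (dist a2 a3) Q1 Q2 Q3 hc
    m12.2 m13.2 m23.2 m12.1 m13.1 m23.1
    (hsf _ h12 _ h13 _ h23) (hsf _ h12 _ h23 _ h13) (hsf _ h13 _ h23 _ h12)
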